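/- Let P be a finite poset. For every order ideal I ∈ J(P), the probability μ_{m,≤}(I) converges to μ_lin(I) as m → ∞; that is, the weak distributions μ_{m,≤} converge pointwise to the linear distribution μ_lin. -/

import Mathlib

open Finset
open scoped Classical
open scoped Topology

noncomputable section

variable {α : Type*} [Fintype α] [PartialOrder α]

/-- `I` is an order ideal (down-set) of the finite poset `α`. -/
def IsIdeal (I : Finset α) : Prop := ∀ p ∈ I, ∀ q : α, q ≤ p → q ∈ I

/-- The set `J(P)` of all order ideals of the finite poset `α`. -/
def idealsFinset (α : Type*) [Fintype α] [PartialOrder α] : Finset (Finset α) :=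
  Finset.univ.filter fun I => IsIdeal I

/-- `p` can be toggled in to the order ideal `I`. -/
def CanToggleIn (I : Finset α) (p : α) : Prop := p ∉ I ∧ IsIdeal (insert p I)

/-- `p` can be toggled out of the order ideal `I`. -/
def CanToggleOut (I : Finset α) (p : α) : Prop := p ∈ I ∧ IsIdeal (I.erase p)

/-- The jaggedness of `I`: the number of elements that can be toggled in,
plus the number of elements that can be toggled out. -/
def jag (I : Finset α) : ℕ :=
  (Finset.univ.filter fun p => CanToggleIn I p).card +
  (Finset.univ.filter fun p => CanToggleOut I p).card

/-- The probability, under `μ`, that a random order ideal satisfies `E`. -/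
def prIdeal (μ : Finset α → ℝ) (E : Finset α → Prop) : ℝ :=
  ∑ I ∈ (idealsFinset α).filter E, μ I

/-- `μ` is toggle-symmetric: for every `p`, the probability that `p` can be toggled in
equals the probability that `p` can be toggled out. -/
def ToggleSymmetric (μ : Finset α → ℝ) : Prop :=
  ∀ p : α, prIdeal μ (fun I => CanToggleIn I p) = prIdeal μ (fun I => CanToggleOut I p)

/-- `μ` is a probability distribution on `J(P)`. -/
def IsProbDist (μ : Finset α → ℝ) : Prop :=
  (∀ I, 0 ≤ μ I) ∧ (∀ I, ¬ IsIdeal I → μ I = 0) ∧ (∑ I ∈ idealsFinset α, μ I = 1)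

/-- The expectation of the statistic `f` with respect to `μ`. -/
def expectStat (μ : Finset α → ℝ) (f : Finset α → ℝ) : ℝ :=
  ∑ I ∈ idealsFinset α, μ I * f I

/-- The linear extensions of `α`: order-preserving bijections `α ≃ {1,…,n}`. -/
def linExts (α : Type*) [Fintype α] [PartialOrder α] :
    Finset (α ≃ Fin (Fintype.card α)) :=
  Finset.univ.filter fun e => ∀ p q : α, p ≤ q → e p ≤ e q

/-- The linear distribution `μ_lin` on `J(P)`: the distribution of `ℓ⁻¹({1,…,k})` for a
uniformly random linear extension `ℓ` and uniform `k ∈ {0,1,…,n}`. -/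
def muLin (α : Type*) [Fintype α] [PartialOrder α] (I : Finset α) : ℝ :=
  (∑ e ∈ linExts α, ∑ k ∈ Finset.range (Fintype.card α + 1),
      if Finset.univ.filter (fun p => (e p : ℕ) < k) = I then (1 : ℝ) else 0) /
    ((linExts α).card * (Fintype.card α + 1))

/-- Weak reverse `P`-partitions of height `m`: order-preserving maps `α → {0,1,…,m}`. -/
def wrpp (α : Type*) [Fintype α] [PartialOrder α] (m : ℕ) : Finset (α → Fin (m + 1)) :=
  Finset.univ.filter fun ℓ => ∀ p q : α, p ≤ q → ℓ p ≤ ℓ q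

/-- The weak distribution `μ_{m,≤}` on `J(P)`: the distribution of `ℓ⁻¹({0,…,k−1})` for a
uniformly random weak reverse `P`-partition `ℓ` of height `m` and uniform `k ∈ {1,…,m}`. -/
def muWeak (α : Type*) [Fintype α] [PartialOrder α] (m : ℕ) (I : Finset α) : ℝ :=
  (∑ ℓ ∈ wrpp α m, ∑ k ∈ Finset.Icc 1 m,
      if Finset.univ.filter (fun p => (ℓ p : ℕ) < k) = I then (1 : ℝ) else 0) /
    ((wrpp α m).card * m)


lemma aux_downset_nat (V : Finset ℕ) (h : ∀ x ∈ V, ∀ y, y ≤ x → y ∈ V) :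
    ∀ x, x ∈ V ↔ x < V.card := by
  intro x
  constructor
  · intro hx
    by_contra hc
    push_neg at hc
    have hsub : Finset.range (x+1) ⊆ V := fun y hy =>
      h x hx y (by simpa [Nat.lt_succ_iff] using Finset.mem_range.1 hy)
    have := Finset.card_le_card hsub
    simp [Finset.card_range] at this
    omega
  · intro hx
    by_contra hc
    have hsub : V ⊆ Finset.range x := by
      intro v hv
      rw [Finset.mem_range]
      by_contra hvx
      push_neg at hvx
      exact hc (h v hv x hvx)
    have := Finset.card_le_card hsub
    simp [Finset.card_range] at this
    omega

lemma card_filter_val_lt (N k : ℕ) (hk : k ≤ N) :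
    ((univ : Finset (Fin N)).filter fun i : Fin N => (i : ℕ) < k).card = k := by
  have h : (univ.filter fun i : Fin N => (i:ℕ) < k)
      = (Finset.range k).attachFin (fun m hm => lt_of_lt_of_le (Finset.mem_range.1 hm) hk) := by
    ext i; simp [Finset.mem_attachFin]
  rw [h, Finset.card_attachFin, Finset.card_range]

lemma downset_fin (N : ℕ) (U : Finset (Fin N)) (h : ∀ i ∈ U, ∀ j : Fin N, j ≤ i → j ∈ U) :
    U = univ.filter fun i : Fin N => (i : ℕ) < U.card := by
  have hV : ∀ x ∈ U.image Fin.val, ∀ y, y ≤ x → y ∈ U.image Fin.val := by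
    intro x hx y hy
    obtain ⟨i, hi, rfl⟩ := Finset.mem_image.1 hx
    exact Finset.mem_image.2 ⟨⟨y, lt_of_le_of_lt hy i.isLt⟩, h i hi _ hy, rfl⟩
  have hcard : (U.image Fin.val).card = U.card := Finset.card_image_of_injective _ Fin.val_injective
  ext i
  simp only [Finset.mem_filter, Finset.mem_univ, true_and]
  rw [← hcard]
  constructor
  · intro hi; exact (aux_downset_nat _ hV _).1 (Finset.mem_image_of_mem _ hi)
  · intro hi
    have hmem := (aux_downset_nat _ hV _).2 hi
    obtain ⟨j, hj, hji⟩ := Finset.mem_image.1 hmem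
    rwa [Fin.val_injective hji] at hj

lemma sum_choose_mul_choose (a : ℕ) : ∀ (M b : ℕ),
    ∑ k ∈ Finset.range (M+1), k.choose a * (M - k).choose b = (M+1).choose (a+b+1) := by
  intro M
  induction M with
  | zero =>
    intro b
    cases a <;> cases b <;> simp [Nat.choose]
  | succ M ih =>
    intro b
    cases b with
    | zero =>
      simp only [Nat.choose_zero_right, mul_one, Nat.add_zero]
      rw [← Nat.sum_Icc_choose]
      apply (Finset.sum_subset _ _).symm
      · intro x hx
        rw [Finset.mem_range]
        have := (Finset.mem_Icc.1 hx).2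
        omega
      · intro x _ hx
        have : x < a := by
          by_contra hc
          push_neg at hc
          exact hx (Finset.mem_Icc.2 ⟨hc, by
            have := Finset.mem_range.1 ‹x ∈ Finset.range (M+1+1)›
            omega⟩)
        exact Nat.choose_eq_zero_of_lt this
    | succ b =>
      rw [Finset.sum_range_succ, Nat.sub_self, Nat.choose_zero_succ, mul_zero, add_zero]
      have hsplit : ∀ k ∈ Finset.range (M+1),
          k.choose a * (M + 1 - k).choose (b+1)
            = k.choose a * (M-k).choose b + k.choose a * (M-k).choose (b+1) := by
        intro k hk
        have hk' : k ≤ M := Nat.lt_succ_iff.1 (Finset.mem_range.1 hk)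
        rw [show M + 1 - k = (M - k) + 1 by omega, Nat.choose_succ_succ, mul_add]
      rw [Finset.sum_congr rfl hsplit, Finset.sum_add_distrib, ih b, ih (b+1)]
      have : a + (b+1) + 1 = (a + b + 1) + 1 := by omega
      rw [this, Nat.choose_succ_succ (M+1) (a+b+1)]


def FF (m : ℕ) (S : Finset (Fin (m+1))) (hS : S.card = Fintype.card α)
    (e : α ≃ Fin (Fintype.card α)) : α → Fin (m+1) :=
  fun p => ↑(S.orderIsoOfFin hS (e p))

lemma FF_congr {m : ℕ} {S1 S2 : Finset (Fin (m+1))} (h : S1 = S2) {h1 : S1.card = Fintype.card α}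
    {h2 : S2.card = Fintype.card α} {e1 e2 : α ≃ Fin (Fintype.card α)} (he : e1 = e2) :
    FF m S1 h1 e1 = FF m S2 h2 e2 := by subst h; subst he; rfl

lemma FF_mem_wrpp {m : ℕ} {S : Finset (Fin (m+1))} {hS : S.card = Fintype.card α}
    {e : α ≃ Fin (Fintype.card α)} (he : e ∈ linExts α) : FF m S hS e ∈ wrpp α m := by
  simp only [wrpp, Finset.mem_filter, Finset.mem_univ, true_and]
  intro p q hpq
  have h1 : e p ≤ e q := by
    simp only [linExts, Finset.mem_filter, Finset.mem_univ, true_and] at he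
    exact he p q hpq
  exact Subtype.coe_le_coe.2 ((S.orderIsoOfFin hS).monotone h1)

lemma FF_injective {m : ℕ} {S : Finset (Fin (m+1))} {hS : S.card = Fintype.card α}
    {e : α ≃ Fin (Fintype.card α)} : Function.Injective (FF m S hS e) := by
  intro p q h
  exact e.injective ((S.orderIsoOfFin hS).injective (Subtype.ext h))

lemma FF_image {m : ℕ} {S : Finset (Fin (m+1))} {hS : S.card = Fintype.card α}
    {e : α ≃ Fin (Fintype.card α)} : Finset.image (FF m S hS e) univ = S := by
  apply Finset.eq_of_subset_of_card_le
  · intro x hx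
    obtain ⟨p, _, rfl⟩ := Finset.mem_image.1 hx
    exact (S.orderIsoOfFin hS (e p)).2
  · rw [Finset.card_image_of_injective _ FF_injective, card_univ]
    exact le_of_eq hS

lemma card_filter_equiv_lt (e : α ≃ Fin (Fintype.card α)) (j : ℕ) (hj : j ≤ Fintype.card α) :
    (univ.filter fun p : α => ((e p : Fin (Fintype.card α)) : ℕ) < j).card = j := by
  rw [show j = ((univ : Finset (Fin (Fintype.card α))).filter
      fun i : Fin (Fintype.card α) => (i : ℕ) < j).card from (card_filter_val_lt _ j hj).symm]
  apply Finset.card_nbij (fun p => e p)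
  · intro p hp
    simp only [Finset.mem_coe, Finset.mem_filter, Finset.mem_univ, true_and,
      card_filter_val_lt _ j hj] at hp ⊢
    exact hp
  · exact e.injective.injOn
  · intro i hi
    simp only [Finset.coe_filter, Set.mem_setOf_eq, Finset.mem_univ, true_and,
      card_filter_val_lt _ j hj] at hi
    exact ⟨e.symm i, by simpa [card_filter_val_lt _ j hj] using hi, by simp⟩

lemma FF_filter_lt {m : ℕ} {S : Finset (Fin (m+1))} {hS : S.card = Fintype.card α}
    {e : α ≃ Fin (Fintype.card α)} (k : ℕ) :
    univ.filter (fun p : α => ((FF m S hS e p : Fin (m+1)) : ℕ) < k)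
      = univ.filter (fun p : α =>
          ((e p : Fin (Fintype.card α)) : ℕ) < (S.filter fun s : Fin (m+1) => (s:ℕ) < k).card) := by
  set U : Finset (Fin (Fintype.card α)) :=
    univ.filter (fun i => ((S.orderIsoOfFin hS i : Fin (m+1)) : ℕ) < k) with hU
  have hdown : ∀ i ∈ U, ∀ j : Fin (Fintype.card α), j ≤ i → j ∈ U := by
    intro i hi j hj
    simp only [hU, Finset.mem_filter, Finset.mem_univ, true_and] at hi ⊢
    have hmono : ((S.orderIsoOfFin hS j : Fin (m+1)) : ℕ) ≤ (S.orderIsoOfFin hS i : Fin (m+1)) :=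
      Subtype.coe_le_coe.2 ((S.orderIsoOfFin hS).monotone hj)
    omega
  have hUcard : U.card = (S.filter fun s : Fin (m+1) => (s:ℕ) < k).card := by
    apply Finset.card_nbij (fun i => ((S.orderIsoOfFin hS i : Fin (m+1))))
    · intro i hi
      simp only [hU, Finset.mem_coe, Finset.mem_filter, Finset.mem_univ, true_and] at hi
      exact Finset.mem_filter.2 ⟨(S.orderIsoOfFin hS i).2, hi⟩
    · intro i _ j _ hij
      exact (S.orderIsoOfFin hS).injective (Subtype.ext hij)
    · intro s hs
      simp only [Finset.coe_filter, Set.mem_setOf_eq] at hs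
      obtain ⟨hsS, hsk⟩ := hs
      refine ⟨(S.orderIsoOfFin hS).symm ⟨s, hsS⟩, ?_, by simp⟩
      simp only [hU, Finset.coe_filter, Set.mem_setOf_eq, Finset.mem_univ, true_and]
      simpa using hsk
  have hmem : ∀ p : α, (((FF m S hS e p : Fin (m+1)) : ℕ) < k ↔ (e p : ℕ) < U.card) := by
    intro p
    have h1 : (((FF m S hS e p : Fin (m+1)) : ℕ) < k) ↔ e p ∈ U := by
      simp only [hU, FF, Finset.mem_filter, Finset.mem_univ, true_and]
    have h2 : e p ∈ U ↔ ((e p : Fin (Fintype.card α)) : ℕ) < U.card := by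
      conv_lhs => rw [downset_fin _ U hdown]
      simp
    rw [h1, h2]
  ext p
  simp only [Finset.mem_filter, Finset.mem_univ, true_and, hmem, hUcard]

def eOf (m : ℕ) (ℓ : α → Fin (m+1)) (hinj : Function.Injective ℓ) :
    α ≃ Fin (Fintype.card α) :=
  Equiv.ofBijective
    (fun p => ((Finset.image ℓ univ).orderIsoOfFin
        (by rw [Finset.card_image_of_injective _ hinj, card_univ])).symm
      ⟨ℓ p, Finset.mem_image_of_mem ℓ (Finset.mem_univ p)⟩)
    (by
      refine (Fintype.bijective_iff_injective_and_card _).2 ⟨?_, by simp⟩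
      intro p q h
      have h2 := congrArg (fun x => (((Finset.image ℓ univ).orderIsoOfFin
        (by rw [Finset.card_image_of_injective _ hinj, card_univ])) x : Fin (m+1))) h
      simp only [OrderIso.apply_symm_apply] at h2
      exact hinj h2)

lemma FF_eOf {m : ℕ} {ℓ : α → Fin (m+1)} (hinj : Function.Injective ℓ) :
    FF m (Finset.image ℓ univ)
      (by rw [Finset.card_image_of_injective _ hinj, card_univ]) (eOf m ℓ hinj) = ℓ := by
  funext p
  simp only [FF, eOf, Equiv.ofBijective_apply, OrderIso.apply_symm_apply]

lemma eOf_mem_linExts {m : ℕ} {ℓ : α → Fin (m+1)} (hℓ : ℓ ∈ wrpp α m)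
    (hinj : Function.Injective ℓ) : eOf m ℓ hinj ∈ linExts α := by
  simp only [linExts, Finset.mem_filter, Finset.mem_univ, true_and]
  intro p q hpq
  have h1 : ℓ p ≤ ℓ q := by
    simp only [wrpp, Finset.mem_filter, Finset.mem_univ, true_and] at hℓ
    exact hℓ p q hpq
  simp only [eOf, Equiv.ofBijective_apply]
  exact ((Finset.image ℓ univ).orderIsoOfFin _).symm.monotone (Subtype.mk_le_mk.2 h1)

lemma eOf_FF {m : ℕ} {S : Finset (Fin (m+1))} {hS : S.card = Fintype.card α}
    {e : α ≃ Fin (Fintype.card α)} (hinj : Function.Injective (FF m S hS e)) :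
    eOf m (FF m S hS e) hinj = e := by
  apply Equiv.ext
  intro p
  simp only [eOf, Equiv.ofBijective_apply]
  rw [OrderIso.symm_apply_eq]
  apply Subtype.ext
  exact (congrFun (FF_congr (h2 := hS) FF_image rfl) p).symm

lemma master (m : ℕ) (Pl : (α → Fin (m+1)) → Prop) (Pe : (α ≃ Fin (Fintype.card α)) → Prop)
    (PS : Finset (Fin (m+1)) → Prop)
    (hcompat : ∀ e ∈ linExts α, ∀ S : Finset (Fin (m+1)), ∀ hS : S.card = Fintype.card α,
        (Pl (FF m S hS e) ↔ Pe e ∧ PS S)) :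
    ((wrpp α m).filter fun ℓ => Function.Injective ℓ ∧ Pl ℓ).card
      = ((linExts α).filter Pe).card *
        (((univ : Finset (Fin (m+1))).powersetCard (Fintype.card α)).filter PS).card := by
  rw [← Finset.card_product]
  apply Finset.card_bij (fun ℓ hℓ => (eOf m ℓ (by
      simp only [Finset.mem_filter] at hℓ; exact hℓ.2.1), Finset.image ℓ univ))
  · intro ℓ hℓ
    simp only [Finset.mem_filter] at hℓ
    obtain ⟨hw, hinj, hP⟩ := hℓ
    have hcard : (Finset.image ℓ univ).card = Fintype.card α := by
      rw [Finset.card_image_of_injective _ hinj, card_univ]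
    have hcomp := (hcompat (eOf m ℓ hinj) (eOf_mem_linExts hw hinj) (Finset.image ℓ univ) hcard)
    rw [FF_eOf hinj] at hcomp
    have := hcomp.1 hP
    simp only [Finset.mem_product, Finset.mem_filter, Finset.mem_powersetCard]
    exact ⟨⟨eOf_mem_linExts hw hinj, this.1⟩, ⟨Finset.subset_univ _, hcard⟩, this.2⟩
  · intro ℓ1 h1 ℓ2 h2 heq
    simp only [Finset.mem_filter] at h1 h2
    simp only [Prod.mk.injEq] at heq
    rw [← FF_eOf h1.2.1, ← FF_eOf h2.2.1]
    exact FF_congr heq.2 heq.1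
  · rintro ⟨e, S⟩ hb
    simp only [Finset.mem_product, Finset.mem_filter, Finset.mem_powersetCard] at hb
    obtain ⟨⟨he, hPe⟩, ⟨-, hScard⟩, hPS⟩ := hb
    refine ⟨FF m S hScard e, ?_, ?_⟩
    · simp only [Finset.mem_filter]
      exact ⟨FF_mem_wrpp he, FF_injective, (hcompat e he S hScard).2 ⟨hPe, hPS⟩⟩
    · simp only [Prod.mk.injEq]
      exact ⟨eOf_FF _, FF_image⟩


lemma card_filter_eq_of_iff {β : Type*} {s : Finset β} {p q : β → Prop} {hp : DecidablePred p}
    {hq : DecidablePred q} (h : ∀ x ∈ s, (p x ↔ q x)) :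
    (@Finset.filter β p hp s).card = (@Finset.filter β q hq s).card := by
  apply Finset.card_bij (fun x _ => x)
  · intro x hx
    rw [Finset.mem_filter] at hx ⊢
    exact ⟨hx.1, (h x hx.1).1 hx.2⟩
  · intro x _ y _ hxy; exact hxy
  · intro y hy
    rw [Finset.mem_filter] at hy
    exact ⟨y, Finset.mem_filter.2 ⟨hy.1, (h y hy.1).2 hy.2⟩, rfl⟩

lemma card_filter_true {β : Type*} {s : Finset β} {h : DecidablePred (fun _ : β => True)} :
    (@Finset.filter β (fun _ => True) h s).card = s.card := by
  congr 1
  ext x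
  simp [Finset.mem_filter]

lemma card_powersetCard_filter_split {γ : Type*} [DecidableEq γ] (A : Finset γ) (n a : ℕ)
    (han : a ≤ n) (p : γ → Prop) [DecidablePred p] :
    ((A.powersetCard n).filter fun S => (S.filter p).card = a).card
      = (A.filter p).card.choose a * (A.filter fun x => ¬ p x).card.choose (n - a) := by
  rw [← Finset.card_powersetCard, ← Finset.card_powersetCard, ← Finset.card_product]
  apply Finset.card_bij (fun S _ => (S.filter p, S.filter fun x => ¬ p x))
  · intro S hS
    simp only [Finset.mem_filter, Finset.mem_powersetCard] at hS
    obtain ⟨⟨hsub, hcard⟩, ha⟩ := hS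
    have hnp : (S.filter fun x => ¬ p x).card = n - a := by
      have := Finset.card_filter_add_card_filter_not (s := S) (p := p)
      omega
    simp only [Finset.mem_product, Finset.mem_powersetCard]
    exact ⟨⟨Finset.monotone_filter_left p hsub, ha⟩, Finset.monotone_filter_left _ hsub, hnp⟩
  · intro S1 h1 S2 h2 heq
    simp only [Prod.mk.injEq] at heq
    rw [← Finset.filter_union_filter_not_eq p S1, ← Finset.filter_union_filter_not_eq p S2,
      heq.1, heq.2]
  · rintro ⟨T, U⟩ hb
    simp only [Finset.mem_product, Finset.mem_powersetCard] at hb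
    obtain ⟨⟨hT, hTc⟩, hU, hUc⟩ := hb
    have hTp : ∀ x ∈ T, p x := fun x hx => (Finset.mem_filter.1 (hT hx)).2
    have hUp : ∀ x ∈ U, ¬ p x := fun x hx => (Finset.mem_filter.1 (hU hx)).2
    have hdisj : Disjoint T U := by
      rw [Finset.disjoint_left]; intro x hxT hxU; exact hUp x hxU (hTp x hxT)
    have hfT : (T ∪ U).filter p = T := by
      rw [Finset.filter_union, Finset.filter_eq_self.2 hTp,
        Finset.filter_false_of_mem hUp, Finset.union_empty]
    have hfU : (T ∪ U).filter (fun x => ¬ p x) = U := by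
      rw [Finset.filter_union, Finset.filter_eq_self.2 hUp,
        Finset.filter_false_of_mem (fun x hx h => h (hTp x hx)), Finset.empty_union]
    refine ⟨T ∪ U, ?_, by simp [hfT, hfU]⟩
    simp only [Finset.mem_filter, Finset.mem_powersetCard]
    refine ⟨⟨Finset.union_subset (hT.trans (Finset.filter_subset _ _))
      (hU.trans (Finset.filter_subset _ _)), ?_⟩, by rw [hfT, hTc]⟩
    rw [Finset.card_union_of_disjoint hdisj, hTc, hUc]
    omega

lemma card_wrpp_inj (m : ℕ) :
    ((wrpp α m).filter fun ℓ => Function.Injective ℓ).card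
      = (linExts α).card * (m+1).choose (Fintype.card α) := by
  have hm := master (α := α) m (fun _ => True) (fun _ => True) (fun _ => True)
    (by intro e he S hS; simp only [true_and, and_self])
  refine Eq.trans (card_filter_eq_of_iff ?_) (hm.trans ?_)
  · intro x _; simp only [and_true]
  rw [card_filter_true, card_filter_true,
    Finset.card_powersetCard, card_univ, Fintype.card_fin]

lemma card_wrpp_inj_cond (m k : ℕ) (hk : k ≤ m+1) (I : Finset α)
    (haI : I.card ≤ Fintype.card α) :
    ((wrpp α m).filter fun ℓ : α → Fin (m+1) =>
        Function.Injective ℓ ∧ univ.filter (fun p => (ℓ p : ℕ) < k) = I).card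
      = ((linExts α).filter fun e =>
          univ.filter (fun p => ((e p : Fin (Fintype.card α)) : ℕ) < I.card) = I).card
        * (k.choose I.card * ((m+1-k).choose (Fintype.card α - I.card))) := by
  refine Eq.trans (card_filter_eq_of_iff ?_) (Eq.trans (master (α := α) m
    (fun ℓ : α → Fin (m+1) => univ.filter (fun p => (ℓ p : ℕ) < k) = I)
    (fun e : α ≃ Fin (Fintype.card α) =>
      univ.filter (fun p => ((e p : Fin (Fintype.card α)) : ℕ) < I.card) = I)
    (fun S : Finset (Fin (m+1)) =>
      (S.filter fun s : Fin (m+1) => (s:ℕ) < k).card = I.card) ?_) ?_)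
  · exact fun x _ => Iff.rfl
  · intro e he S hS
    rw [FF_filter_lt k]
    constructor
    · intro h
      have hjn : (S.filter fun s : Fin (m+1) => (s:ℕ) < k).card ≤ Fintype.card α := by
        rw [← hS]; exact Finset.card_le_card (Finset.filter_subset _ _)
      have hcard : I.card = (S.filter fun s : Fin (m+1) => (s:ℕ) < k).card := by
        rw [← h]; exact card_filter_equiv_lt e _ hjn
      exact ⟨by rw [hcard]; exact h, hcard.symm⟩
    · rintro ⟨h1, h2⟩
      rw [h2]; exact h1
  · refine congrArg₂ (fun x y : ℕ => x * y) (card_filter_eq_of_iff fun x _ => Iff.rfl) ?_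
    refine Eq.trans (card_filter_eq_of_iff (fun x _ => Iff.rfl)) (Eq.trans
      (card_powersetCard_filter_split univ (Fintype.card α) I.card haI
        (fun s : Fin (m+1) => (s:ℕ) < k)) ?_)
    have h1 : ((univ : Finset (Fin (m+1))).filter fun s : Fin (m+1) => (s:ℕ) < k).card = k :=
      card_filter_val_lt _ _ hk
    have h2 : ((univ : Finset (Fin (m+1))).filter fun s : Fin (m+1) => ¬ (s:ℕ) < k).card
        = m+1-k := by
      have := Finset.card_filter_add_card_filter_not
        (s := (univ : Finset (Fin (m+1)))) (p := fun s : Fin (m+1) => (s:ℕ) < k)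
      rw [card_univ, Fintype.card_fin] at this
      omega
    rw [h1, h2]

lemma card_wrpp_noninj_le (m : ℕ) :
    ((wrpp α m).filter fun ℓ => ¬ Function.Injective ℓ).card
      ≤ Fintype.card α * Fintype.card α * (m+1) ^ (Fintype.card α - 1) := by
  have hsub : ((wrpp α m).filter fun ℓ => ¬ Function.Injective ℓ)
      ⊆ (univ : Finset α).offDiag.biUnion
        (fun pq => univ.filter fun ℓ : α → Fin (m+1) => ℓ pq.1 = ℓ pq.2) := by
    intro ℓ hℓ
    simp only [Finset.mem_filter] at hℓ
    rw [Function.not_injective_iff] at hℓ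
    obtain ⟨-, p, q, hpq, hne⟩ := hℓ
    exact Finset.mem_biUnion.2 ⟨(p,q), Finset.mem_offDiag.2 ⟨mem_univ _, mem_univ _, hne⟩,
      by simp [hpq]⟩
  have hcard1 : ∀ pq : α × α, pq ∈ (univ : Finset α).offDiag →
      (univ.filter fun ℓ : α → Fin (m+1) => ℓ pq.1 = ℓ pq.2).card
        ≤ (m+1) ^ (Fintype.card α - 1) := by
    intro pq hpq
    obtain ⟨-, -, hne⟩ := Finset.mem_offDiag.1 hpq
    have hle : (univ.filter fun ℓ : α → Fin (m+1) => ℓ pq.1 = ℓ pq.2).card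
        ≤ (univ : Finset ({x : α // x ≠ pq.2} → Fin (m+1))).card := by
      apply Finset.card_le_card_of_injOn (fun ℓ => fun x => ℓ x.1) (fun _ _ => mem_univ _)
      intro ℓ1 h1 ℓ2 h2 heq
      simp only [Finset.coe_filter, Set.mem_setOf_eq, mem_univ, true_and] at h1 h2
      funext x
      by_cases hx : x = pq.2
      · subst hx
        have hpq1 : ℓ1 pq.1 = ℓ2 pq.1 := congrFun heq ⟨pq.1, hne⟩
        rw [← h1, hpq1, h2]
      · exact congrFun heq ⟨x, hx⟩
    calc (univ.filter fun ℓ : α → Fin (m+1) => ℓ pq.1 = ℓ pq.2).card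
        ≤ (univ : Finset ({x : α // x ≠ pq.2} → Fin (m+1))).card := hle
      _ = (m+1) ^ (Fintype.card α - 1) := by
          have hcs : Fintype.card {x : α // x ≠ pq.2} = Fintype.card α - 1 := by
            rw [show (Fintype.card {x : α // x ≠ pq.2})
                = Fintype.card {x : α // ¬ (x = pq.2)} from rfl]
            rw [Fintype.card_subtype_compl, Fintype.card_subtype_eq]
          rw [card_univ, Fintype.card_fun, Fintype.card_fin, hcs]
  calc ((wrpp α m).filter fun ℓ => ¬ Function.Injective ℓ).card
      ≤ ((univ : Finset α).offDiag.biUnion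
          (fun pq => univ.filter fun ℓ : α → Fin (m+1) => ℓ pq.1 = ℓ pq.2)).card :=
        Finset.card_le_card hsub
    _ ≤ ∑ pq ∈ (univ : Finset α).offDiag,
          (univ.filter fun ℓ : α → Fin (m+1) => ℓ pq.1 = ℓ pq.2).card :=
        Finset.card_biUnion_le
    _ ≤ ∑ _pq ∈ (univ : Finset α).offDiag, (m+1) ^ (Fintype.card α - 1) :=
        Finset.sum_le_sum hcard1
    _ ≤ Fintype.card α * Fintype.card α * (m+1) ^ (Fintype.card α - 1) := by
        rw [Finset.sum_const, smul_eq_mul]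
        apply Nat.mul_le_mul_right
        rw [Finset.offDiag_card, card_univ]
        exact Nat.sub_le _ _

lemma muLin_eq (I : Finset α) :
    muLin α I = (((linExts α).filter fun e =>
        univ.filter (fun p => ((e p : Fin (Fintype.card α)) : ℕ) < I.card) = I).card : ℝ)
      / ((linExts α).card * (Fintype.card α + 1)) := by
  have haI : I.card ≤ Fintype.card α := Finset.card_le_univ I
  · unfold muLin
    congr 1
    have hinner : ∀ e ∈ linExts α, (∑ k ∈ Finset.range (Fintype.card α + 1),
        if univ.filter (fun p => ((e p : Fin (Fintype.card α)) : ℕ) < k) = I then (1:ℝ) else 0)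
        = if univ.filter (fun p => ((e p : Fin (Fintype.card α)) : ℕ) < I.card) = I
          then (1:ℝ) else 0 := by
      intro e _
      rw [Finset.sum_eq_single_of_mem I.card (Finset.mem_range.2 (by omega))]
      intro k hk hkne
      rw [if_neg]
      intro hc
      apply hkne
      have := card_filter_equiv_lt e k (Nat.lt_succ_iff.1 (Finset.mem_range.1 hk))
      rw [hc] at this
      omega
    rw [Finset.sum_congr rfl hinner, Finset.sum_boole]
    try exact congrArg _ (card_filter_eq_of_iff (fun x _ => Iff.rfl))

lemma linExts_nonempty : (linExts α).Nonempty := by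
  letI : Fintype (LinearExtension α) := ‹Fintype α›
  let g : LinearExtension α ≃o Fin (Fintype.card α) :=
    (monoEquivOfFin (LinearExtension α) rfl).symm
  refine ⟨g.toEquiv, ?_⟩
  refine Finset.mem_filter.2 ⟨mem_univ _, ?_⟩
  intro p q hpq
  exact g.monotone (toLinearExtension.monotone' hpq)

open Filter in
lemma tendsto_descF_div_pow (c r : ℕ) :
    Tendsto (fun m : ℕ => (((m+c).descFactorial r : ℝ)) / (m:ℝ)^r) atTop (𝓝 1) := by
  have heq : ∀ m : ℕ, (((m+c).descFactorial r : ℝ)) / (m:ℝ)^r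
      = ∏ i ∈ Finset.range r, ((m + c - i : ℕ) : ℝ) / (m:ℝ) := by
    intro m
    rw [Nat.descFactorial_eq_prod_range, Nat.cast_prod, Finset.prod_div_distrib]
    congr 1
    rw [Finset.prod_const, Finset.card_range]
  have hlim : Tendsto (fun m : ℕ => ∏ i ∈ Finset.range r, ((m + c - i : ℕ) : ℝ) / (m:ℝ))
      atTop (𝓝 (∏ _i ∈ Finset.range r, (1:ℝ))) := by
    apply tendsto_finset_prod
    intro i _
    have h1 : Tendsto (fun m : ℕ => 1 + ((c:ℝ) - (i:ℝ)) / (m:ℝ)) atTop (𝓝 (1 + 0)) :=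
      tendsto_const_nhds.add (tendsto_const_div_atTop_nhds_zero_nat _)
    rw [add_zero] at h1
    apply h1.congr'
    filter_upwards [eventually_ge_atTop i, eventually_ge_atTop 1] with m hm hm1
    have hle : i ≤ m + c := le_trans hm (Nat.le_add_right _ _)
    have hm0 : (0:ℝ) < (m:ℝ) := by exact_mod_cast hm1
    field_simp
    push_cast [Nat.cast_sub hle]
    ring
  rw [show (1:ℝ) = ∏ _i ∈ Finset.range r, (1:ℝ) by simp]
  exact hlim.congr (fun m => (heq m).symm)

open Filter in
lemma tendsto_choose_div_pow (c r : ℕ) :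
    Tendsto (fun m : ℕ => (((m+c).choose r : ℝ)) / (m:ℝ)^r) atTop
      (𝓝 (1 / (r.factorial : ℝ))) := by
  have hfac : ∀ m : ℕ, (((m+c).choose r : ℝ)) / (m:ℝ)^r
      = ((((m+c).descFactorial r : ℝ)) / (m:ℝ)^r) * (1 / (r.factorial : ℝ)) := by
    intro m
    have h := Nat.choose_eq_descFactorial_div_factorial (m+c) r
    have hdvd : r.factorial ∣ (m+c).descFactorial r := Nat.factorial_dvd_descFactorial _ _
    have hcast : (((m+c).choose r : ℝ)) = ((m+c).descFactorial r : ℝ) / (r.factorial : ℝ) := by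
      rw [h, Nat.cast_div hdvd (by exact_mod_cast (Nat.factorial_pos r).ne')]
    rw [hcast]
    ring
  simp only [hfac]
  have := (tendsto_descF_div_pow c r).mul_const (1 / (r.factorial : ℝ))
  rwa [one_mul] at this

open Filter in
lemma tendsto_pow_succ_div_pow (j : ℕ) :
    Tendsto (fun m : ℕ => (((m+1):ℝ))^j / (m:ℝ)^(j+1)) atTop (𝓝 0) := by
  apply tendsto_of_tendsto_of_tendsto_of_le_of_le' (g := fun _ => (0:ℝ))
    (h := fun m : ℕ => (2:ℝ)^j / (m:ℝ)) tendsto_const_nhds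
    (tendsto_const_div_atTop_nhds_zero_nat _)
  · filter_upwards [eventually_ge_atTop 1] with m hm
    positivity
  · filter_upwards [eventually_ge_atTop 1] with m hm
    have hm1 : (1:ℝ) ≤ (m:ℝ) := by exact_mod_cast hm
    have hmpos : (0:ℝ) < (m:ℝ) := by linarith
    have hnum : ((m:ℝ)+1)^j ≤ (2:ℝ)^j * (m:ℝ)^j := by
      rw [← mul_pow]
      apply pow_le_pow_left₀ (by linarith)
      linarith
    have h2 : (2:ℝ)^j * (m:ℝ)^j / (m:ℝ)^(j+1) = (2:ℝ)^j / (m:ℝ) := by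
      rw [pow_succ]
      field_simp
      try ring
    calc ((m:ℝ)+1)^j / (m:ℝ)^(j+1) ≤ (2:ℝ)^j * (m:ℝ)^j / (m:ℝ)^(j+1) := by gcongr
      _ = (2:ℝ)^j / (m:ℝ) := h2

/- ===== final assembly ===== -/

def cntSeq (α : Type*) [Fintype α] [PartialOrder α] (I : Finset α) (m k : ℕ) : ℕ :=
  ((wrpp α m).filter fun ℓ : α → Fin (m+1) =>
    Finset.univ.filter (fun p => (ℓ p : ℕ) < k) = I).card

def numSeq (α : Type*) [Fintype α] [PartialOrder α] (I : Finset α) (m : ℕ) : ℕ :=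
  ∑ k ∈ Finset.Icc 1 m, cntSeq α I m k

def cbadSeq (α : Type*) [Fintype α] [PartialOrder α] (I : Finset α) (m k : ℕ) : ℕ :=
  ((wrpp α m).filter fun ℓ : α → Fin (m+1) =>
    ¬ Function.Injective ℓ ∧ Finset.univ.filter (fun p => (ℓ p : ℕ) < k) = I).card

def badSeq (α : Type*) [Fintype α] [PartialOrder α] (m : ℕ) : ℕ :=
  ((wrpp α m).filter fun ℓ : α → Fin (m+1) => ¬ Function.Injective ℓ).card

def EI (α : Type*) [Fintype α] [PartialOrder α] (I : Finset α) : ℕ :=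
  ((linExts α).filter fun e =>
    Finset.univ.filter (fun p => ((e p : Fin (Fintype.card α)) : ℕ) < I.card) = I).card

def bndSeq (n a m : ℕ) : ℕ :=
  Nat.choose 0 a * (m+1).choose (n-a) + (m+1).choose a * Nat.choose 0 (n-a)

lemma card_filter_le {β : Type*} {s : Finset β} {p q : β → Prop} {hp : DecidablePred p}
    {hq : DecidablePred q} (h : ∀ x ∈ s, p x → q x) :
    (@Finset.filter β p hp s).card ≤ (@Finset.filter β q hq s).card :=
  Finset.card_le_card (fun x hx => by
    rw [Finset.mem_filter] at *
    exact ⟨hx.1, h x hx.1 hx.2⟩)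

lemma muWeak_eq_numSeq (I : Finset α) (m : ℕ) :
    muWeak α m I = (numSeq α I m : ℝ) / (((wrpp α m).card : ℝ) * (m:ℝ)) := by
  have h : (∑ ℓ ∈ wrpp α m, ∑ k ∈ Finset.Icc 1 m,
      if Finset.univ.filter (fun p => (ℓ p : ℕ) < k) = I then (1:ℝ) else 0)
      = (numSeq α I m : ℝ) := by
    rw [Finset.sum_comm]
    unfold numSeq cntSeq
    rw [Nat.cast_sum]
    apply Finset.sum_congr rfl
    intro k _
    rw [Finset.sum_boole]
    try exact congrArg _ (card_filter_eq_of_iff fun x _ => Iff.rfl)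
  unfold muWeak
  rw [h]
  try push_cast
  try ring

lemma cnt_split (I : Finset α) (m k : ℕ) (hk : k ≤ m+1) :
    cntSeq α I m k
      = EI α I * (k.choose I.card * ((m+1-k).choose (Fintype.card α - I.card)))
        + cbadSeq α I m k := by
  have hsplit := Finset.card_filter_add_card_filter_not
    (s := (wrpp α m).filter (fun ℓ : α → Fin (m+1) =>
      Finset.univ.filter (fun p => (ℓ p : ℕ) < k) = I))
    (p := fun ℓ => Function.Injective ℓ)
  rw [Finset.filter_filter, Finset.filter_filter] at hsplit
  unfold cntSeq
  rw [← hsplit]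
  congr 1
  · refine Eq.trans ?_ (card_wrpp_inj_cond m k hk I (Finset.card_le_univ I))
    exact card_filter_eq_of_iff (fun x _ => and_comm)
  · unfold cbadSeq
    exact card_filter_eq_of_iff (fun x _ => and_comm)

lemma numSeq_eq (I : Finset α) (m : ℕ) :
    numSeq α I m
      = EI α I * (∑ k ∈ Finset.Icc 1 m,
          k.choose I.card * ((m+1-k).choose (Fintype.card α - I.card)))
        + ∑ k ∈ Finset.Icc 1 m, cbadSeq α I m k := by
  unfold numSeq
  rw [Finset.mul_sum, ← Finset.sum_add_distrib]
  apply Finset.sum_congr rfl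
  intro k hk
  exact cnt_split I m k (by have := (Finset.mem_Icc.1 hk).2; omega)

lemma Q_identity (n a : ℕ) (han : a ≤ n) (m : ℕ) :
    (∑ k ∈ Finset.Icc 1 m, k.choose a * ((m+1-k).choose (n-a))) + bndSeq n a m
      = (m+2).choose (n+1) := by
  have h := sum_choose_mul_choose a (m+1) (n-a)
  rw [show a + (n-a) + 1 = n + 1 by omega] at h
  rw [show (m+2) = (m+1)+1 from rfl, ← h]
  rw [Finset.sum_range_succ, Finset.sum_range_succ']
  have hIcc : (∑ k ∈ Finset.Icc 1 m, k.choose a * ((m+1-k).choose (n-a)))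
      = ∑ i ∈ Finset.range m, (i+1).choose a * ((m+1-(i+1)).choose (n-a)) := by
    rw [← Finset.Ico_add_one_right_eq_Icc, Finset.sum_Ico_eq_sum_range]
    apply Finset.sum_congr (by congr 1)
    intro i _
    rw [Nat.add_comm 1 i]
  rw [hIcc]
  unfold bndSeq
  simp only [Nat.sub_zero, Nat.sub_self, Nat.add_sub_cancel_left]
  ring

lemma den_eq (m : ℕ) :
    (wrpp α m).card
      = (linExts α).card * (m+1).choose (Fintype.card α) + badSeq α m := by
  have h := Finset.card_filter_add_card_filter_not (s := wrpp α m)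
    (p := fun ℓ : α → Fin (m+1) => Function.Injective ℓ)
  have h1 : ((wrpp α m).filter fun ℓ : α → Fin (m+1) => Function.Injective ℓ).card
      = (linExts α).card * (m+1).choose (Fintype.card α) :=
    (card_filter_eq_of_iff (fun x _ => Iff.rfl)).trans (card_wrpp_inj m)
  have h2 : ((wrpp α m).filter fun ℓ : α → Fin (m+1) => ¬ Function.Injective ℓ).card
      = badSeq α m := card_filter_eq_of_iff (fun x _ => Iff.rfl)
  omega

lemma badSeq_le (m : ℕ) :
    badSeq α m ≤ Fintype.card α * Fintype.card α * (m+1) ^ (Fintype.card α - 1) :=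
  le_trans (le_of_eq (card_filter_eq_of_iff (fun x _ => Iff.rfl))) (card_wrpp_noninj_le m)

lemma badSeq_mul_le (m : ℕ) :
    badSeq α m * m ≤ Fintype.card α * Fintype.card α * (m+1) ^ (Fintype.card α) := by
  rcases Nat.eq_zero_or_pos (Fintype.card α) with h0 | hpos
  · have hb := badSeq_le (α := α) m
    rw [h0] at hb
    simp only [Nat.zero_mul, Nat.mul_zero, zero_mul, Nat.le_zero] at hb
    simp [hb, h0]
  · calc badSeq α m * m
        ≤ (Fintype.card α * Fintype.card α * (m+1) ^ (Fintype.card α - 1)) * m :=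
          Nat.mul_le_mul_right _ (badSeq_le m)
      _ ≤ (Fintype.card α * Fintype.card α) * ((m+1) ^ (Fintype.card α - 1) * (m+1)) := by
          rw [mul_assoc]
          exact Nat.mul_le_mul_left _ (Nat.mul_le_mul_left _ (Nat.le_succ m))
      _ = Fintype.card α * Fintype.card α * (m+1) ^ (Fintype.card α) := by
          rw [← pow_succ]
          have hmm : Fintype.card α - 1 + 1 = Fintype.card α := by omega
          rw [hmm]

lemma cbad_le (I : Finset α) (m k : ℕ) : cbadSeq α I m k ≤ badSeq α m :=
  card_filter_le (fun x _ h => h.1)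

lemma BadS_le (I : Finset α) (m : ℕ) :
    (∑ k ∈ Finset.Icc 1 m, cbadSeq α I m k)
      ≤ Fintype.card α * Fintype.card α * (m+1) ^ (Fintype.card α) := by
  have h1 : (∑ k ∈ Finset.Icc 1 m, cbadSeq α I m k) ≤ m * badSeq α m := by
    calc (∑ k ∈ Finset.Icc 1 m, cbadSeq α I m k)
        ≤ ∑ _k ∈ Finset.Icc 1 m, badSeq α m := Finset.sum_le_sum (fun k _ => cbad_le I m k)
      _ = m * badSeq α m := by
          rw [Finset.sum_const, Nat.card_Icc, smul_eq_mul]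
          have hmm : m + 1 - 1 = m := by omega
          rw [hmm]
  calc (∑ k ∈ Finset.Icc 1 m, cbadSeq α I m k) ≤ m * badSeq α m := h1
    _ = badSeq α m * m := by ring
    _ ≤ _ := badSeq_mul_le m

lemma bnd_le (n a : ℕ) (m : ℕ) (han : a ≤ n) : bndSeq n a m ≤ 2 * (m+1)^n := by
  unfold bndSeq
  have h0 : ∀ j : ℕ, Nat.choose 0 j ≤ 1 := by
    intro j
    cases j with
    | zero => simp
    | succ j => simp [Nat.choose_zero_succ]
  have hc : ∀ j : ℕ, j ≤ n → (m+1).choose j ≤ (m+1)^n := fun j hj =>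
    le_trans (Nat.choose_le_pow _ _) (Nat.pow_le_pow_right (Nat.succ_pos m) hj)
  have t1 : Nat.choose 0 a * (m+1).choose (n-a) ≤ (m+1)^n :=
    le_trans (Nat.mul_le_mul (h0 a) (hc _ (Nat.sub_le n a))) (by omega)
  have t2 : (m+1).choose a * Nat.choose 0 (n-a) ≤ (m+1)^n :=
    le_trans (Nat.mul_le_mul (hc a han) (h0 _)) (by omega)
  omega

lemma tendsto_zero_of_nat_le (f : ℕ → ℕ) (C j : ℕ) (hle : ∀ m, f m ≤ C * (m+1)^j) :
    Filter.Tendsto (fun m : ℕ => (f m : ℝ) / (m:ℝ)^(j+1)) Filter.atTop (nhds 0) := by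
  apply tendsto_of_tendsto_of_tendsto_of_le_of_le' (g := fun _ => (0:ℝ))
    (h := fun m : ℕ => (C:ℝ) * (((m:ℝ)+1)^j / (m:ℝ)^(j+1))) tendsto_const_nhds
    (by simpa using (tendsto_pow_succ_div_pow j).const_mul (C:ℝ))
  · filter_upwards [Filter.eventually_ge_atTop 1] with m hm
    positivity
  · filter_upwards [Filter.eventually_ge_atTop 1] with m hm
    have hm1 : (1:ℝ) ≤ (m:ℝ) := by exact_mod_cast hm
    have hmpos : (0:ℝ) < (m:ℝ)^(j+1) := by positivity
    rw [← mul_div_assoc]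
    rw [div_le_div_iff_of_pos_right hmpos]
    calc (f m : ℝ) ≤ ((C * (m+1)^j : ℕ) : ℝ) := by exact_mod_cast hle m
      _ = (C:ℝ) * ((m:ℝ)+1)^j := by push_cast; ring

/-- part of Proposition 2.8: the weak distributions `μ_{m,≤}` converge
pointwise, as `m → ∞`, to the linear distribution `μ_lin`. -/
theorem muWeak_tendsto_muLin (α : Type*) [Fintype α] [PartialOrder α] :
    ∀ I ∈ idealsFinset α,
      Filter.Tendsto (fun m : ℕ => muWeak α m I) Filter.atTop (nhds (muLin α I)) := by
  intro I _
  have haI : I.card ≤ Fintype.card α := Finset.card_le_univ I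
  have hLpos : 0 < (linExts α).card := Finset.card_pos.2 linExts_nonempty
  set n := Fintype.card α with hn
  -- numerator limit
  have hNR : Filter.Tendsto (fun m : ℕ => (numSeq α I m : ℝ)/(m:ℝ)^(n+1)) Filter.atTop
      (nhds ((EI α I : ℝ) / ((n+1).factorial : ℝ))) := by
    have hterm1 : Filter.Tendsto (fun m : ℕ =>
        (EI α I : ℝ) * (((m+2).choose (n+1) : ℝ)/(m:ℝ)^(n+1))) Filter.atTop
        (nhds ((EI α I : ℝ) * (1/((n+1).factorial : ℝ)))) :=
      (tendsto_choose_div_pow 2 (n+1)).const_mul _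
    have hterm2 : Filter.Tendsto (fun m : ℕ =>
        (EI α I : ℝ) * ((bndSeq n I.card m : ℝ)/(m:ℝ)^(n+1))) Filter.atTop (nhds 0) := by
      have := (tendsto_zero_of_nat_le (fun m => bndSeq n I.card m) 2 n
        (fun m => bnd_le n I.card m haI)).const_mul (EI α I : ℝ)
      simpa using this
    have hterm3 : Filter.Tendsto (fun m : ℕ =>
        ((∑ k ∈ Finset.Icc 1 m, cbadSeq α I m k : ℕ) : ℝ)/(m:ℝ)^(n+1)) Filter.atTop
        (nhds 0) := by
      exact tendsto_zero_of_nat_le _ (n*n) n (fun m => BadS_le I m)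
    have hfun : ∀ m : ℕ, (numSeq α I m : ℝ)/(m:ℝ)^(n+1)
        = (EI α I : ℝ) * (((m+2).choose (n+1) : ℝ)/(m:ℝ)^(n+1))
          - (EI α I : ℝ) * ((bndSeq n I.card m : ℝ)/(m:ℝ)^(n+1))
          + ((∑ k ∈ Finset.Icc 1 m, cbadSeq α I m k : ℕ) : ℝ)/(m:ℝ)^(n+1) := by
      intro m
      have hnum : (numSeq α I m : ℝ)
          = (EI α I : ℝ) * ((∑ k ∈ Finset.Icc 1 m,
              k.choose I.card * ((m+1-k).choose (n - I.card)) : ℕ) : ℝ)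
            + ((∑ k ∈ Finset.Icc 1 m, cbadSeq α I m k : ℕ) : ℝ) := by
        rw [numSeq_eq I m]
        push_cast
        ring
      have hQ : ((∑ k ∈ Finset.Icc 1 m,
            k.choose I.card * ((m+1-k).choose (n - I.card)) : ℕ) : ℝ)
            + (bndSeq n I.card m : ℝ) = ((m+2).choose (n+1) : ℝ) := by
        exact_mod_cast Q_identity n I.card haI m
      rw [← mul_div_assoc, ← mul_div_assoc, ← sub_div, ← add_div]
      congr 1
      rw [hnum]
      linear_combination (EI α I : ℝ) * hQ
    have hval : (EI α I : ℝ) * (1/((n+1).factorial : ℝ)) - 0 + 0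
        = (EI α I : ℝ) / ((n+1).factorial : ℝ) := by ring
    rw [← hval]
    exact ((hterm1.sub hterm2).add hterm3).congr fun m => (hfun m).symm
  -- denominator limit
  have hDR : Filter.Tendsto (fun m : ℕ => (((wrpp α m).card : ℝ) * (m:ℝ))/(m:ℝ)^(n+1))
      Filter.atTop (nhds (((linExts α).card : ℝ)/(n.factorial : ℝ))) := by
    have hfun : ∀ m : ℕ, (((wrpp α m).card : ℝ) * (m:ℝ))/(m:ℝ)^(n+1)
        = ((linExts α).card : ℝ) * ((((m+1).choose n : ℝ) * (m:ℝ))/(m:ℝ)^(n+1))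
          + ((badSeq α m * m : ℕ) : ℝ)/(m:ℝ)^(n+1) := by
      intro m
      have hcast : ((wrpp α m).card : ℝ)
          = ((linExts α).card : ℝ) * (((m+1).choose n : ℝ)) + (badSeq α m : ℝ) := by
        exact_mod_cast den_eq m
      rw [hcast]
      push_cast
      ring
    have ht1 : Filter.Tendsto (fun m : ℕ =>
        ((linExts α).card : ℝ) * ((((m+1).choose n : ℝ) * (m:ℝ))/(m:ℝ)^(n+1)))
        Filter.atTop (nhds (((linExts α).card : ℝ) * (1/(n.factorial : ℝ)))) := by
      apply Filter.Tendsto.const_mul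
      apply (tendsto_choose_div_pow 1 n).congr'
      filter_upwards [Filter.eventually_ge_atTop 1] with m hm
      have hmpos : (0:ℝ) < (m:ℝ) := by exact_mod_cast hm
      have hm0 : (m:ℝ) ≠ 0 := hmpos.ne'
      rw [pow_succ]
      field_simp
      try ring
    have ht2 : Filter.Tendsto (fun m : ℕ => ((badSeq α m * m : ℕ) : ℝ)/(m:ℝ)^(n+1))
        Filter.atTop (nhds 0) :=
      tendsto_zero_of_nat_le _ (n*n) n (fun m => badSeq_mul_le m)
    have hval : ((linExts α).card : ℝ) * (1/(n.factorial : ℝ)) + 0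
        = ((linExts α).card : ℝ)/(n.factorial : ℝ) := by ring
    rw [← hval]
    exact (ht1.add ht2).congr fun m => (hfun m).symm
  have hdenne : (((linExts α).card : ℝ)/(n.factorial : ℝ)) ≠ 0 := by
    have h1 : (0:ℝ) < ((linExts α).card : ℝ) := by exact_mod_cast hLpos
    have h2 : (0:ℝ) < (n.factorial : ℝ) := by exact_mod_cast n.factorial_pos
    positivity
  have hmain := hNR.div hDR hdenne
  have hvalue : ((EI α I : ℝ)/((n+1).factorial : ℝ))
      / (((linExts α).card : ℝ)/(n.factorial : ℝ)) = muLin α I := by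
    rw [muLin_eq I]
    have hfac : (((n+1).factorial : ℕ) : ℝ) = ((n:ℝ)+1) * (n.factorial : ℝ) := by
      rw [Nat.factorial_succ]
      push_cast
      ring
    have h1 : ((n.factorial : ℕ) : ℝ) ≠ 0 := by
      exact_mod_cast (Nat.factorial_pos n).ne'
    have h2 : (((linExts α).card : ℕ) : ℝ) ≠ 0 := by
      exact_mod_cast hLpos.ne'
    have h3 : (EI α I : ℝ) = (((linExts α).filter fun e =>
        Finset.univ.filter (fun p => ((e p : Fin (Fintype.card α)) : ℕ) < I.card) = I).card : ℝ) := by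
      unfold EI
      norm_num
    rw [← h3, hfac]
    have h4 : ((n:ℝ)+1) ≠ 0 := by positivity
    field_simp
    ring
  rw [← hvalue]
  apply hmain.congr'
  filter_upwards [Filter.eventually_ge_atTop 1] with m hm
  simp only [Pi.div_apply]
  rw [muWeak_eq_numSeq I m]
  have hmpos : (0:ℝ) < (m:ℝ) := by exact_mod_cast hm
  have hc : ((m:ℝ))^(n+1) ≠ 0 := by positivity
  rcases eq_or_ne (((wrpp α m).card : ℝ) * (m:ℝ)) 0 with hy | hy
  · rw [hy]
    simp
  · field_simp
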